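/- Let G₁ be a finite connected graph that is not complete, let G₂ be a finite graph with at least one vertex, and let X ⊆ V(G₁) be a minimum vertex-cut of G₁. Then the set X̄ = X × V(G₂) is a minimum vertex-cut of the lexicographic product G₁∘G₂. -/

import Mathlib

/-- The lexicographic product of two simple graphs: `(x₁,y₁)` is adjacent to `(x₂,y₂)`
iff `x₁x₂` is an edge of `G`, or `x₁ = x₂` and `y₁y₂` is an edge of `H`. -/
def lexProd {V W : Type*} (G : SimpleGraph V) (H : SimpleGraph W) :
    SimpleGraph (V × W) where
  Adj p q := G.Adj p.1 q.1 ∨ (p.1 = q.1 ∧ H.Adj p.2 q.2)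
  symm := by
    refine ⟨?_⟩
    rintro ⟨x₁, y₁⟩ ⟨x₂, y₂⟩ (h | ⟨rfl, h⟩)
    · exact Or.inl h.symm
    · exact Or.inr ⟨rfl, h.symm⟩
  loopless := by
    refine ⟨?_⟩
    rintro ⟨x, y⟩ (h | ⟨-, h⟩)
    · exact G.loopless.irrefl x h
    · exact H.loopless.irrefl y h

/-- The set `V₀(G)` of isolated vertices of `G`. -/
def isoSet {V : Type*} (G : SimpleGraph V) : Set V := {v | ∀ w, ¬ G.Adj v w}

/-- The set of vertices of `G − S` that are isolated in `G − S`,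
i.e. `V₀(G − S)` regarded as a subset of the vertices of `G`. -/
def isolatedAfter {V : Type*} (G : SimpleGraph V) (S : Set V) : Set V :=
  {v | v ∉ S ∧ ∀ w ∉ S, ¬ G.Adj v w}

/-- `S` is a vertex-cut of `G`: deleting `S` leaves a disconnected graph, or reduces `G`
to the trivial one-vertex graph `K₁`. -/
def IsVertexCut {V : Type*} (G : SimpleGraph V) (S : Set V) : Prop :=
  (Sᶜ.Nonempty ∧ ¬ (G.induce Sᶜ).Connected) ∨ (∃ v, Sᶜ = {v})

/-- The connectivity `κ(G)`: the minimum cardinality of a vertex-cut of `G`. -/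
noncomputable def graphConnectivity {V : Type*} (G : SimpleGraph V) : ℕ :=
  sInf {n | ∃ S : Set V, IsVertexCut G S ∧ S.ncard = n}

/-- A minimum vertex-cut: a vertex-cut of cardinality `κ(G)`. -/
def IsMinVertexCut {V : Type*} (G : SimpleGraph V) (S : Set V) : Prop :=
  IsVertexCut G S ∧ S.ncard = graphConnectivity G

/-- A k₁-vertex-cut: a vertex-cut `S` such that `G − S` has no isolated vertices. -/
def IsK1VertexCut {V : Type*} (G : SimpleGraph V) (S : Set V) : Prop :=
  IsVertexCut G S ∧ ∀ v ∉ S, ∃ w ∉ S, G.Adj v w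

/-- The k₁-connectivity `k₁(G)`, valued in `ℕ∞`; it is `⊤` (infinity) if `G`
has no k₁-vertex-cut. -/
noncomputable def k1Connectivity {V : Type*} (G : SimpleGraph V) : ℕ∞ :=
  sInf {n : ℕ∞ | ∃ S : Set V, IsK1VertexCut G S ∧ (S.ncard : ℕ∞) = n}

/-- `G` is super connected if every minimum vertex-cut isolates a vertex,
i.e. some vertex of `G − S` has no neighbours in `G − S`. -/
def SuperConnected {V : Type*} (G : SimpleGraph V) : Prop :=
  ∀ S : Set V, IsMinVertexCut G S → ∃ v ∉ S, ∀ w ∉ S, ¬ G.Adj v w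


section Aux

open SimpleGraph

variable {V W : Type*}

/-- Cardinality of `A ×ˢ univ`. -/
lemma ncard_prod_univ (A : Set V) : (A ×ˢ (Set.univ : Set W)).ncard = A.ncard * Nat.card W := by
  rw [← Nat.card_coe_set_eq, ← Nat.card_coe_set_eq,
    Nat.card_congr (Equiv.Set.prod A Set.univ), Nat.card_prod]
  congr 1
  exact Nat.card_congr (Equiv.Set.univ W)

/-- In an induced subgraph, a walk starting at a vertex all of whose neighbours in the
set are missing cannot move. -/
lemma walk_from_isolated (G : SimpleGraph V) (A : Set V) (a : V)
    (hnbr : ∀ c ∈ A, ¬ G.Adj a c) :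
    ∀ (x y : ↥A) (p : (G.induce A).Walk x y), x.val = a → y.val = a := by
  intro x y p
  induction p with
  | nil => exact id
  | cons h p ih =>
    rename_i x c y
    intro hx
    exact absurd (show G.Adj a c.val from hx ▸ h) (hnbr c.val c.property)

/-- Projecting a walk in the induced subgraph of the lexicographic product on
`B ×ˢ univ` to a reachability statement in `G₁.induce B`. -/
lemma reach_proj (G₁ : SimpleGraph V) (G₂ : SimpleGraph W) (B : Set V)
    (p q : ↥(B ×ˢ (Set.univ : Set W)))
    (h : ((lexProd G₁ G₂).induce (B ×ˢ Set.univ)).Reachable p q) :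
    (G₁.induce B).Reachable ⟨p.val.1, p.property.1⟩ ⟨q.val.1, q.property.1⟩ := by
  obtain ⟨wk⟩ := h
  induction wk with
  | nil => exact Reachable.refl _
  | cons h wk ih =>
    rename_i x c y
    rcases (h : (lexProd G₁ G₂).Adj x.val c.val) with h' | ⟨heq, -⟩
    · exact (show (G₁.induce B).Adj ⟨x.val.1, x.property.1⟩ ⟨c.val.1, c.property.1⟩
        from h').reachable.trans ih
    · have : (⟨x.val.1, x.property.1⟩ : ↥B) = ⟨c.val.1, c.property.1⟩ := Subtype.ext heq
      rw [this]; exact ih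

/-- Lifting a walk in `G₁ − T` (where `T` is the set of fully-deleted columns) to
reachability in the product minus `S`. -/
lemma lift_reach (G₁ : SimpleGraph V) (G₂ : SimpleGraph W) (S : Set (V × W))
    (u v : ↥({v : V | ∀ w, (v, w) ∈ S}ᶜ))
    (p : (G₁.induce ({v : V | ∀ w, (v, w) ∈ S}ᶜ)).Walk u v) :
    ∀ (y z : W) (hy : (u.val, y) ∉ S) (hz : (v.val, z) ∉ S),
      u.val = v.val ∨
      ((lexProd G₁ G₂).induce Sᶜ).Reachable ⟨(u.val, y), hy⟩ ⟨(v.val, z), hz⟩ := by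
  induction p with
  | nil => intro y z hy hz; exact Or.inl rfl
  | cons h p ih =>
    rename_i u c v
    intro y z hy hz
    have hG : G₁.Adj u.val c.val := h
    obtain ⟨w, hw⟩ : ∃ w, (c.val, w) ∉ S := by
      have := c.property
      simp only [Set.mem_compl_iff, Set.mem_setOf_eq, not_forall] at this
      exact this
    right
    rcases ih w z hw hz with heq | hr
    · exact (show ((lexProd G₁ G₂).induce Sᶜ).Adj ⟨(u.val, y), hy⟩ ⟨(v.val, z), hz⟩
        from Or.inl (show G₁.Adj u.val v.val from heq ▸ hG)).reachable
    · exact (show ((lexProd G₁ G₂).induce Sᶜ).Adj ⟨(u.val, y), hy⟩ ⟨(c.val, w), hw⟩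
        from Or.inl hG).reachable.trans hr

end Aux

/-- If X is a minimum vertex-cut of the connected non-complete graph G₁, then
X̄ = X × V(G₂) is a minimum vertex-cut of G₁∘G₂. -/
theorem isMinVertexCut_prod {V W : Type*} [Fintype V] [Fintype W] [Nonempty W]
    (G₁ : SimpleGraph V) (G₂ : SimpleGraph W)
    (hconn : G₁.Connected) (hnc : G₁ ≠ ⊤)
    (X : Set V) (hX : IsMinVertexCut G₁ X) :
    IsMinVertexCut (lexProd G₁ G₂) (X ×ˢ (Set.univ : Set W)) := by
  classical
  obtain ⟨hXcut, hXcard⟩ := hX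
  -- G₁ is not complete: get a non-adjacent pair
  obtain ⟨u, v, huv, hadj⟩ : ∃ u v, u ≠ v ∧ ¬ G₁.Adj u v := by
    by_contra h
    push_neg at h
    apply hnc
    ext a b
    simp only [SimpleGraph.top_adj]
    exact ⟨fun hab => hab.ne, fun hab => h a b hab⟩
  have : Nontrivial V := ⟨u, v, huv⟩
  have hV2 : 2 ≤ Fintype.card V := Fintype.one_lt_card
  have hW1 : 1 ≤ Fintype.card W := Fintype.card_pos
  -- the pair `{u,v}ᶜ` is a vertex-cut of `G₁` of size |V| - 2
  have hnbru : ∀ c ∈ ({u, v} : Set V), ¬ G₁.Adj u c := by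
    rintro c (rfl | rfl)
    · exact G₁.loopless.irrefl _
    · exact hadj
  have hpaircut : IsVertexCut G₁ ({u, v}ᶜ) := by
    left
    rw [compl_compl]
    refine ⟨⟨u, Or.inl rfl⟩, fun hc => ?_⟩
    obtain ⟨wk⟩ := hc.preconnected ⟨u, Or.inl rfl⟩ ⟨v, Or.inr rfl⟩
    exact huv (walk_from_isolated G₁ {u, v} u hnbru _ _ wk rfl).symm
  have hpcard : ({u, v}ᶜ : Set V).ncard = Fintype.card V - 2 := by
    have h1 := Set.ncard_add_ncard_compl ({u, v} : Set V)
    rw [Set.ncard_pair huv, Nat.card_eq_fintype_card] at h1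
    omega
  have hκ2 : graphConnectivity G₁ ≤ Fintype.card V - 2 :=
    Nat.sInf_le ⟨_, hpaircut, hpcard⟩
  have hXle : X.ncard ≤ Fintype.card V - 2 := hXcard ▸ hκ2
  -- X cannot reduce G₁ to a single vertex
  rcases hXcut with ⟨hXne, hXdis⟩ | ⟨v0, hv0⟩
  swap
  · exfalso
    have hXeq : X = ({v0} : Set V)ᶜ := by rw [← compl_compl X, hv0]
    have h1 := Set.ncard_add_ncard_compl ({v0} : Set V)
    rw [Set.ncard_singleton, Nat.card_eq_fintype_card] at h1
    rw [hXeq] at hXle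
    omega
  -- get disconnection witnesses for G₁ − X
  have hne : Nonempty ↥Xᶜ := hXne.to_subtype
  obtain ⟨a, b, hab⟩ : ∃ a b : ↥Xᶜ, ¬ (G₁.induce Xᶜ).Reachable a b := by
    by_contra h
    push_neg at h
    exact hXdis ((SimpleGraph.connected_iff _).mpr ⟨fun p q => h p q, hne⟩)
  have w0 : W := Classical.arbitrary W
  have hcompl : (X ×ˢ (Set.univ : Set W))ᶜ = Xᶜ ×ˢ (Set.univ : Set W) := by
    ext ⟨p1, p2⟩; simp
  -- X̄ is a vertex-cut of the product
  have hcut : IsVertexCut (lexProd G₁ G₂) (X ×ˢ (Set.univ : Set W)) := by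
    left
    rw [hcompl]
    refine ⟨⟨(a.val, w0), ⟨a.property, trivial⟩⟩, fun hc => ?_⟩
    have hr := hc.preconnected ⟨(a.val, w0), ⟨a.property, trivial⟩⟩
      ⟨(b.val, w0), ⟨b.property, trivial⟩⟩
    have := reach_proj G₁ G₂ Xᶜ _ _ hr
    apply hab
    have ea : (⟨a.val, a.property⟩ : ↥Xᶜ) = a := Subtype.ext rfl
    have eb : (⟨b.val, b.property⟩ : ↥Xᶜ) = b := Subtype.ext rfl
    rw [← ea, ← eb]
    exact this
  -- cardinality of X̄
  have hcard : (X ×ˢ (Set.univ : Set W)).ncard = X.ncard * Fintype.card W := by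
    rw [ncard_prod_univ, Nat.card_eq_fintype_card]
  refine ⟨hcut, ?_⟩
  -- lower bound: every vertex-cut S of the product has |S| ≥ |X|·|W|
  have hlb : ∀ S : Set (V × W), IsVertexCut (lexProd G₁ G₂) S →
      X.ncard * Fintype.card W ≤ S.ncard := by
    intro S hScut
    rcases hScut with ⟨hSne, hSdis⟩ | ⟨p0, hp0⟩
    swap
    · -- singleton case
      have hSeq : S = ({p0} : Set (V × W))ᶜ := by rw [← compl_compl S, hp0]
      have h1 := Set.ncard_add_ncard_compl ({p0} : Set (V × W))
      rw [Set.ncard_singleton, Nat.card_eq_fintype_card, Fintype.card_prod] at h1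
      rw [hSeq]
      have h2 : X.ncard + 2 ≤ Fintype.card V := by omega
      have h3 : (X.ncard + 2) * Fintype.card W ≤ Fintype.card V * Fintype.card W :=
        Nat.mul_le_mul_right _ h2
      rw [add_mul] at h3
      omega
    · -- disconnected case: let T be the set of fully deleted columns
      set T : Set V := {v : V | ∀ w, (v, w) ∈ S} with hT
      have hTsub : T ×ˢ (Set.univ : Set W) ⊆ S := by
        rintro ⟨p1, p2⟩ hp
        exact hp.1 p2
      have hScard : T.ncard * Fintype.card W ≤ S.ncard := by
        rw [← Nat.card_eq_fintype_card, ← ncard_prod_univ]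
        exact Set.ncard_le_ncard hTsub (Set.toFinite S)
      -- suffices: T is a vertex-cut of G₁
      suffices hTcut : IsVertexCut G₁ T by
        have hκT : graphConnectivity G₁ ≤ T.ncard := Nat.sInf_le ⟨T, hTcut, rfl⟩
        calc X.ncard * Fintype.card W ≤ T.ncard * Fintype.card W :=
              Nat.mul_le_mul_right _ (hXcard ▸ hκT)
          _ ≤ S.ncard := hScard
      -- get disconnection witnesses in the product
      have hSne' : Nonempty ↥Sᶜ := hSne.to_subtype
      obtain ⟨p, q, hpq⟩ : ∃ p q : ↥Sᶜ, ¬ ((lexProd G₁ G₂).induce Sᶜ).Reachable p q := by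
        by_contra h
        push_neg at h
        exact hSdis ((SimpleGraph.connected_iff _).mpr ⟨fun p q => h p q, hSne'⟩)
      have haT : p.val.1 ∉ T := by
        intro h
        exact p.property (h p.val.2)
      have hbT : q.val.1 ∉ T := by
        intro h
        exact q.property (h q.val.2)
      by_cases hab' : p.val.1 = q.val.1
      · -- same column: every G₁-neighbour of a := p.val.1 lies in T
        have hnbr : ∀ c, G₁.Adj p.val.1 c → c ∈ T := by
          intro c hc
          by_contra hcT
          obtain ⟨w, hw⟩ : ∃ w, (c, w) ∉ S := by
            simp only [hT, Set.mem_setOf_eq, not_forall] at hcT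
            exact hcT
          apply hpq
          have s1 : ((lexProd G₁ G₂).induce Sᶜ).Adj p ⟨(c, w), hw⟩ := Or.inl hc
          have s2 : ((lexProd G₁ G₂).induce Sᶜ).Adj ⟨(c, w), hw⟩ q := by
            exact Or.inl (show G₁.Adj c q.val.1 from hab' ▸ hc.symm)
          exact s1.reachable.trans s2.reachable
        by_cases hTsingle : Tᶜ = {p.val.1}
        · exact Or.inr ⟨_, hTsingle⟩
        · left
          have haTc : p.val.1 ∈ Tᶜ := haT
          obtain ⟨c, hcT, hca⟩ : ∃ c, c ∈ Tᶜ ∧ c ≠ p.val.1 := by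
            by_contra h
            push_neg at h
            apply hTsingle
            ext x
            exact ⟨fun hx => h x hx, fun hx => hx ▸ haTc⟩
          refine ⟨⟨p.val.1, haTc⟩, fun hc => ?_⟩
          obtain ⟨wk⟩ := hc.preconnected ⟨p.val.1, haTc⟩ ⟨c, hcT⟩
          have hnbr' : ∀ d ∈ Tᶜ, ¬ G₁.Adj p.val.1 d := fun d hd hadj => hd (hnbr d hadj)
          exact hca (walk_from_isolated G₁ Tᶜ p.val.1 hnbr' _ _ wk rfl)
      · -- different columns: a and b are disconnected in G₁ − T
        left
        refine ⟨⟨p.val.1, haT⟩, fun hc => ?_⟩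
        obtain ⟨wk⟩ := hc.preconnected ⟨p.val.1, haT⟩ ⟨q.val.1, hbT⟩
        rcases lift_reach G₁ G₂ S _ _ wk p.val.2 q.val.2 p.property q.property with
          heq | hre
        · exact hab' heq
        · exact hpq hre
  -- conclude: |X̄| = κ(G₁∘G₂)
  refine le_antisymm ?_ ?_
  · exact le_csInf ⟨_, _, hcut, rfl⟩ (by rintro n ⟨S, hS, rfl⟩; rw [hcard]; exact hlb S hS)
  · exact Nat.sInf_le ⟨_, hcut, rfl⟩
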